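/- Let G₁, ..., Gₙ be independent standard Gumbel random variables and s₁, ..., sₙ real scores. Then for each i, P(sᵢ + Gᵢ = maxⱼ (sⱼ + Gⱼ)) = exp(sᵢ) / ∑ⱼ exp(sⱼ) (the Gumbel-max trick recovers the softmax distribution). -/

import Mathlib

open MeasureTheory ProbabilityTheory Real
open Set

private lemma gumbel_tail_meas (ν : MeasureTheory.Measure ℝ) [MeasureTheory.IsProbabilityMeasure ν]
    (hcdf : ∀ x, ν (Set.Iic x) = ENNReal.ofReal (exp (-exp (-x))))
    {c : ℝ} (hc : 0 < c) (t : ℝ) (ht0 : 0 < t) (ht1 : t < 1) :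
    ν {x : ℝ | t < exp (-(c * exp (-x)))} = ENNReal.ofReal (1 - t ^ (1/c)) := by
  have hlt : 0 < -Real.log t := by
    have := Real.log_neg ht0 ht1; linarith
  have hq : 0 < (-Real.log t) / c := div_pos hlt hc
  set b : ℝ := -Real.log ((-Real.log t) / c) with hb
  have hset : {x : ℝ | t < exp (-(c * exp (-x)))} = Set.Ioi b := by
    ext x
    simp only [Set.mem_setOf_eq, Set.mem_Ioi]
    rw [← Real.exp_log ht0, Real.exp_lt_exp]
    constructor
    · intro h
      have h2 : exp (-x) < (-Real.log t) / c := by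
        rw [lt_div_iff₀ hc]; nlinarith
      have := Real.log_lt_log (exp_pos (-x)) h2
      rw [Real.log_exp] at this
      rw [hb]; linarith
    · intro h
      have h2 : exp (-x) < (-Real.log t) / c := by
        have : -x < Real.log ((-Real.log t) / c) := by rw [hb] at h; linarith
        calc exp (-x) < exp (Real.log ((-Real.log t)/c)) := Real.exp_lt_exp.mpr this
          _ = (-Real.log t)/c := Real.exp_log hq
      rw [lt_div_iff₀ hc] at h2; nlinarith
  rw [hset, ← Set.compl_Iic, prob_compl_eq_one_sub measurableSet_Iic, hcdf]
  have hexpb : exp (-b) = (-Real.log t) / c := by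
    rw [hb, neg_neg, Real.exp_log hq]
  rw [hexpb]
  have : exp (-((-Real.log t)/c)) = t ^ (1/c) := by
    rw [Real.rpow_def_of_pos ht0]
    ring_nf
  rw [this, ← ENNReal.ofReal_one, ← ENNReal.ofReal_sub _ (Real.rpow_nonneg ht0.le _)]

private lemma gumbel_int (ν : MeasureTheory.Measure ℝ) [MeasureTheory.IsProbabilityMeasure ν]
    (hcdf : ∀ x, ν (Set.Iic x) = ENNReal.ofReal (exp (-exp (-x))))
    {c : ℝ} (hc : 0 ≤ c) :
    ∫⁻ x, ENNReal.ofReal (exp (-(c * exp (-x)))) ∂ν = ENNReal.ofReal (1/(1+c)) := by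
  rcases eq_or_lt_of_le hc with rfl | hc
  · simp
  have hcont : Continuous fun x : ℝ => exp (-(c * exp (-x))) := by continuity
  rw [lintegral_eq_lintegral_meas_lt ν (Filter.Eventually.of_forall fun x => (exp_pos _).le)
    hcont.aemeasurable]
  have hzero : ∀ t : ℝ, 1 ≤ t → ν {x : ℝ | t < exp (-(c * exp (-x)))} = 0 := by
    intro t ht
    have : {x : ℝ | t < exp (-(c * exp (-x)))} = ∅ := by
      ext x
      simp only [Set.mem_setOf_eq, Set.mem_empty_iff_false, iff_false, not_lt]
      have h1 : exp (-(c * exp (-x))) ≤ exp 0 := by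
        apply Real.exp_le_exp.mpr
        have : 0 < c * exp (-x) := by positivity
        linarith
      rw [Real.exp_zero] at h1; linarith
    rw [this, measure_empty]
  -- split domain
  have hsplit : (Ioi (0:ℝ)) = Ioo 0 1 ∪ Ici 1 := by
    ext x; simp only [mem_Ioi, mem_union, mem_Ioo, mem_Ici]; constructor
    · intro h; rcases lt_or_ge x 1 with h1 | h1; exacts [Or.inl ⟨h, h1⟩, Or.inr h1]
    · rintro (⟨h, _⟩ | h); exacts [h, by linarith]
  rw [hsplit, lintegral_union measurableSet_Ici (by
    rw [Set.disjoint_left]; rintro x ⟨_, h1⟩ h2; exact absurd h2 (not_le.mpr h1))]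
  have h2 : ∫⁻ t in Ici (1:ℝ), ν {a : ℝ | t < exp (-(c * exp (-a)))} = 0 := by
    rw [setLIntegral_congr_fun measurableSet_Ici
      (fun t ht => hzero t ht), lintegral_zero]
  rw [h2, add_zero]
  have h3 : ∫⁻ t in Ioo (0:ℝ) 1, ν {a : ℝ | t < exp (-(c * exp (-a)))}
      = ∫⁻ t in Ioo (0:ℝ) 1, ENNReal.ofReal (1 - t ^ (1/c)) := by
    apply setLIntegral_congr_fun measurableSet_Ioo
    exact fun t ht => gumbel_tail_meas ν hcdf hc t ht.1 ht.2
  rw [h3]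
  -- compute the Lebesgue integral
  have hint : IntegrableOn (fun t : ℝ => 1 - t ^ (1/c)) (Ioo 0 1) := by
    have h4 : IntervalIntegrable (fun t : ℝ => t ^ (1/c)) volume 0 1 :=
      intervalIntegral.intervalIntegrable_rpow' ((by norm_num : (-1:ℝ) < 0).trans (by positivity))
    have h5 : IntervalIntegrable (fun t : ℝ => 1 - t ^ (1/c)) volume 0 1 :=
      (intervalIntegrable_const).sub h4
    rw [intervalIntegrable_iff_integrableOn_Ioo_of_le zero_le_one] at h5
    exact h5
  rw [← ofReal_integral_eq_lintegral_ofReal hint (by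
    filter_upwards [ae_restrict_mem measurableSet_Ioo] with t ht
    have : t ^ (1/c) ≤ 1 := by
      apply Real.rpow_le_one ht.1.le ht.2.le (by positivity)
    simp only [Pi.zero_apply]; linarith)]
  congr 1
  rw [← integral_Ioc_eq_integral_Ioo, ← intervalIntegral.integral_of_le zero_le_one]
  rw [intervalIntegral.integral_sub intervalIntegrable_const
    (intervalIntegral.intervalIntegrable_rpow' ((by norm_num : (-1:ℝ) < 0).trans (by positivity))),
    intervalIntegral.integral_const, integral_rpow (Or.inl ((by norm_num : (-1:ℝ) < 0).trans (by positivity)))]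
  rw [Real.one_rpow, Real.zero_rpow (by positivity)]
  have h1c : 1/c + 1 ≠ 0 := by positivity
  field_simp
  norm_num


/-- Gumbel-max trick: with i.i.d. standard Gumbels `G i` and scores `s i`, the probability
that `s i + G i` attains the maximum is the softmax `exp (s i) / ∑ j, exp (s j)`. -/
theorem gumbel_max_softmax
    {Ω : Type*} [MeasurableSpace Ω] (μ : Measure Ω) [IsProbabilityMeasure μ]
    (n : ℕ) (hn : 1 ≤ n) (G : Fin n → Ω → ℝ) (s : Fin n → ℝ)
    (hmeas : ∀ i, Measurable (G i))
    (hindep : iIndepFun G μ)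
    (hgum : ∀ i (x : ℝ), μ {ω | G i ω ≤ x} = ENNReal.ofReal (Real.exp (-Real.exp (-x)))) :
    ∀ i : Fin n,
      μ {ω | ∀ j : Fin n, s j + G j ω ≤ s i + G i ω}
        = ENNReal.ofReal (Real.exp (s i) / ∑ j : Fin n, Real.exp (s j)) := by
  intro i
  classical
  set T : Finset (Fin n) := {i}ᶜ with hT
  set c : ℝ := ∑ j ∈ T, Real.exp (s j - s i) with hc
  have hc0 : 0 ≤ c := Finset.sum_nonneg fun j _ => (exp_pos _).le
  -- the tuple of other coordinates
  set Y : Ω → (T → ℝ) := fun ω j => G j ω with hY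
  have hYmeas : Measurable Y := measurable_pi_lambda _ fun j => hmeas j
  -- independence of G i and Y
  have hXY : IndepFun (G i) Y μ := by
    have h1 : IndepFun (fun ω (k : ({i} : Finset (Fin n))) => G k ω)
        (fun ω (j : T) => G j ω) μ := by
      apply hindep.indepFun_finset {i} T _ hmeas
      simp [hT, Finset.disjoint_left]
    have h2 := h1.comp (φ := fun v : ({i} : Finset (Fin n)) → ℝ => v ⟨i, by simp⟩)
      (ψ := id) (measurable_pi_apply _ : Measurable fun v : ({i} : Finset (Fin n)) → ℝ => v ⟨i, by simp⟩) measurable_id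
    exact h2
  -- rewrite event as preimage under the pair map
  set S : Set (ℝ × (T → ℝ)) := {p | ∀ j : T, p.2 j ≤ p.1 + (s i - s j)} with hS
  have hSmeas : MeasurableSet S := by
    have : S = ⋂ j : T, {p : ℝ × (T → ℝ) | p.2 j ≤ p.1 + (s i - s j)} := by
      ext p; simp [hS]
    rw [this]
    exact MeasurableSet.iInter fun j => measurableSet_le (by fun_prop) (by fun_prop)
  have hev : {ω | ∀ j : Fin n, s j + G j ω ≤ s i + G i ω}
      = (fun ω => (G i ω, Y ω)) ⁻¹' S := by
    ext ω
    simp only [Set.mem_setOf_eq, Set.mem_preimage, hS, hY]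
    constructor
    · intro h j; have := h j; linarith
    · intro h j
      by_cases hj : j = i
      · subst hj; exact le_rfl
      · have := h ⟨j, by simp [hT, hj]⟩; dsimp at this; linarith
  rw [hev, ← Measure.map_apply ((hmeas i).prodMk hYmeas) hSmeas,
    (indepFun_iff_map_prod_eq_prod_map_map (hmeas i).aemeasurable hYmeas.aemeasurable).mp hXY,
    Measure.prod_apply hSmeas]
  -- compute inner measure
  have hinner : ∀ x : ℝ, (μ.map Y) (Prod.mk x ⁻¹' S)
      = ENNReal.ofReal (exp (-(c * exp (-x)))) := by
    intro x
    have hpre : Prod.mk x ⁻¹' S = Set.univ.pi fun j : T => Iic (x + (s i - s j)) := by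
      ext y; simp [hS, Set.mem_pi, Subtype.forall, Pi.le_def]
    rw [hpre, Measure.map_apply hYmeas (MeasurableSet.univ_pi fun j => measurableSet_Iic)]
    have hpre2 : Y ⁻¹' (Set.univ.pi fun j : T => Iic (x + (s i - s j)))
        = ⋂ j ∈ T, G j ⁻¹' Iic (x + (s i - s j)) := by
      ext ω
      simp [hY, Set.mem_pi, Subtype.forall, Pi.le_def]
    rw [hpre2, hindep.meas_biInter (fun j _ => ⟨Iic (x + (s i - s j)), measurableSet_Iic, rfl⟩)]
    have : ∀ j ∈ T, μ (G j ⁻¹' Iic (x + (s i - s j)))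
        = ENNReal.ofReal (exp (-(exp (s j - s i) * exp (-x)))) := by
      intro j _
      have := hgum j (x + (s i - s j))
      rw [show {ω | G j ω ≤ x + (s i - s j)} = G j ⁻¹' Iic (x + (s i - s j)) from rfl] at this
      rw [this]
      congr 2
      rw [← Real.exp_add]
      ring_nf
    rw [Finset.prod_congr rfl this, ← ENNReal.ofReal_prod_of_nonneg (fun j _ => (exp_pos _).le)]
    congr 1
    rw [← Real.exp_sum]
    congr 1
    rw [hc, Finset.sum_mul]
    exact Finset.sum_neg_distrib _
  simp_rw [hinner]
  -- apply the integral lemma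
  have hprob : IsProbabilityMeasure (μ.map (G i)) := Measure.isProbabilityMeasure_map (hmeas i).aemeasurable
  have hcdf : ∀ x, (μ.map (G i)) (Iic x) = ENNReal.ofReal (exp (-exp (-x))) := by
    intro x
    rw [Measure.map_apply (hmeas i) measurableSet_Iic]
    exact hgum i x
  rw [gumbel_int (μ.map (G i)) hcdf hc0]
  congr 1
  -- arithmetic: 1/(1+c) = exp (s i) / ∑ j, exp (s j)
  have hsum : 1 + c = (∑ j : Fin n, Real.exp (s j)) / Real.exp (s i) := by
    have h1 : ∑ j : Fin n, Real.exp (s j - s i)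
        = (∑ j : Fin n, Real.exp (s j)) / Real.exp (s i) := by
      rw [Finset.sum_div]
      exact Finset.sum_congr rfl fun j _ => by rw [Real.exp_sub]
    rw [← h1, hc, hT]
    rw [← Finset.sum_compl_add_sum {i} (fun j => Real.exp (s j - s i))]
    simp [add_comm]
  rw [hsum]
  rw [one_div_div]
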